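/- Let X be a Banach space admitting an equivalent norm |||·||| whose modulus of convexity satisfies δ_{|||·|||}(t) ≥ c·t^p for some c > 0 and p ≥ 2 on (0,1]. Then every Walsh–Paley martingale (fₙ) with values in the unit ball B_X satisfies ∑ₙ₌₀^∞ ∫₀¹ ‖dfₙ(t)‖^p dt < ∞, where df₀ = f₀ and dfₙ = fₙ − fₙ₋₁. -/

import Mathlib

open MeasureTheory Filter Set Metric
open scoped Pointwise ENNReal

noncomputable section

section Defs

variable (X : Type*) [NormedAddCommGroup X] [NormedSpace ℝ X]

/-- The Rademacher functions on `[0,1]`. -/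
def rademacher (k : ℕ) (t : ℝ) : ℝ := if Int.fract (2 ^ k * t) < 1 / 2 then 1 else -1

variable {X}

/-- The `L¹` Rademacher average `∫₀¹ ‖∑ₖ rₖ(t) xₖ‖ dt` of a finite sequence. -/
def radAvg {n : ℕ} (x : Fin n → X) : ℝ :=
  ∫ t in Icc (0 : ℝ) 1, ‖∑ k : Fin n, rademacher (k : ℕ) t • x k‖

variable (X)

/-- `N` is a norm on `X`. -/
structure IsNormOn (N : X → ℝ) : Prop where
  add_le : ∀ x y, N (x + y) ≤ N x + N y
  smul_eq : ∀ (c : ℝ) (x : X), N (c • x) = |c| * N x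
  eq_zero : ∀ x, N x = 0 → x = 0

variable {X}

/-- `N` is `γ`-equivalent to the original norm. -/
def EquivNorm (γ : ℝ) (N : X → ℝ) : Prop :=
  ∀ x, γ⁻¹ * ‖x‖ ≤ N x ∧ N x ≤ γ * ‖x‖

/-- The relative modulus of convexity `ϑ_N` (separation in the ambient norm). -/
def relConvMod (N : X → ℝ) (t : ℝ) : ℝ :=
  1 - (1 / 2) * sSup {r | ∃ x y, N x = 1 ∧ N y = 1 ∧ ‖x - y‖ > t ∧ r = N (x + y)}

/-- The modulus of uniform convexity `δ_N`. -/
def convMod (N : X → ℝ) (t : ℝ) : ℝ :=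
  1 - (1 / 2) * sSup {r | ∃ x y, N x = 1 ∧ N y = 1 ∧ N (x - y) > t ∧ r = N (x + y)}

/-- `u` converges weakly to `x`. -/
def WeakConvSeq (u : ℕ → X) (x : X) : Prop :=
  ∀ φ : X →L[ℝ] ℝ, Tendsto (fun n => φ (u n)) atTop (nhds (φ x))

/-- The relative asymptotic modulus `ϑ̄_N` (separation in the ambient norm). -/
def relAsympMod (N : X → ℝ) (t : ℝ) : ℝ :=
  1 - sSup {r | ∃ x : X, r = N x ∧ ∃ u : ℕ → X, WeakConvSeq u x ∧
    (∀ n, N (u n) ≤ 1) ∧ sInf {d | ∃ n m : ℕ, n ≠ m ∧ d = ‖u n - u m‖} > t}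

/-- `Y` is a finite-codimensional subspace. -/
def FiniteCodim (Y : Subspace ℝ X) : Prop := FiniteDimensional ℝ (X ⧸ Y)

/-- The modulus of asymptotic uniform convexity `δ̄_N`. -/
def asympConvMod (N : X → ℝ) (t : ℝ) : ℝ :=
  sInf {r | ∃ x, N x = 1 ∧ r = sSup {s | ∃ Y : Subspace ℝ X, FiniteCodim Y ∧
    s = sInf {v | ∃ y, y ∈ Y ∧ N y = 1 ∧ v = N (x + t • y) - 1}}}

end Defs


section Aux

set_option maxHeartbeats 1000000

variable {X : Type*} [NormedAddCommGroup X] [NormedSpace ℝ X] {N : X → ℝ}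

lemma two_mul_div_aux (n : ℕ) (x : ℝ) : 2*x/2^(n+1) = x/2^n := by
  rw [pow_succ]; field_simp

lemma IsNormOn.zero (hN : IsNormOn X N) : N 0 = 0 := by
  have := hN.smul_eq 0 0; simpa using this

lemma IsNormOn.neg (hN : IsNormOn X N) (x : X) : N (-x) = N x := by
  have := hN.smul_eq (-1) x; simpa using this

lemma IsNormOn.nonneg (hN : IsNormOn X N) (x : X) : 0 ≤ N x := by
  have h := hN.add_le x (-x)
  rw [add_neg_cancel, hN.zero, hN.neg] at h
  linarith

lemma dyadic_cover (n : ℕ) :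
    Ico (0:ℝ) 1 = ⋃ j ∈ Finset.range (2^n), Ico ((j:ℝ)/2^n) (((j:ℝ)+1)/2^n) := by
  have h2 : (0:ℝ) < 2^n := by positivity
  ext t
  simp only [Set.mem_iUnion, Finset.mem_range, Set.mem_Ico]
  constructor
  · rintro ⟨h0, h1⟩
    set k := ⌊t * 2^n⌋ with hk
    have hk0 : 0 ≤ k := Int.floor_nonneg.2 (by positivity)
    have hkle : (k:ℝ) ≤ t * 2^n := Int.floor_le _
    have hklt : t * 2^n < (k:ℝ) + 1 := Int.lt_floor_add_one _
    have hkub : (k:ℝ) < ((2^n:ℕ):ℝ) := by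
      push_cast; calc (k:ℝ) ≤ t * 2^n := hkle
        _ < 1 * 2^n := by nlinarith
        _ = 2^n := one_mul _
    have hkubz : k < ((2^n:ℕ):ℤ) := by exact_mod_cast hkub
    have hcast : ((k.toNat:ℕ):ℝ) = (k:ℝ) := by exact_mod_cast Int.toNat_of_nonneg hk0
    refine ⟨k.toNat, by omega, ?_, ?_⟩
    · rw [hcast, div_le_iff₀ h2]; linarith
    · rw [hcast, lt_div_iff₀ h2]; linarith
  · rintro ⟨j, hj, hl, hu⟩
    constructor
    · have : (0:ℝ) ≤ (j:ℝ)/2^n := by positivity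
      linarith
    · have : ((j:ℝ)+1)/2^n ≤ 1 := by
        rw [div_le_one h2]
        have : (j:ℝ) + 1 ≤ (2^n : ℕ) := by exact_mod_cast Nat.succ_le_of_lt hj
        push_cast at this ⊢; linarith
      linarith

lemma dyadic_integral (n : ℕ) (g : ℝ → ℝ)
    (hg : ∀ j : ℕ, j < 2^n → ∀ t ∈ Ico ((j:ℝ)/2^n) (((j:ℝ)+1)/2^n), g t = g ((j:ℝ)/2^n)) :
    ∫ t in Ico (0:ℝ) 1, g t = (2^n:ℝ)⁻¹ * ∑ j ∈ Finset.range (2^n), g ((j:ℝ)/2^n) := by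
  have h2 : (0:ℝ) < 2^n := by positivity
  have hcov := dyadic_cover n
  have hms : ∀ j ∈ Finset.range (2^n), MeasurableSet (Ico ((j:ℝ)/2^n) (((j:ℝ)+1)/2^n)) :=
    fun j _ => measurableSet_Ico
  have hdisj : (↑(Finset.range (2^n)) : Set ℕ).Pairwise
      (Function.onFun Disjoint fun j : ℕ => Ico ((j:ℝ)/2^n) (((j:ℝ)+1)/2^n)) := by
    intro i _ j _ hij
    rw [Function.onFun, Set.Ico_disjoint_Ico]
    have key : ∀ a b : ℕ, a < b → ((a:ℝ)+1)/2^n ≤ (b:ℝ)/2^n := by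
      intro a b hab
      gcongr
      have : (a:ℝ) + 1 ≤ (b:ℝ) := by exact_mod_cast hab
      linarith
    rcases lt_or_gt_of_ne hij with h | h
    · exact inf_le_left.trans ((key i j h).trans le_sup_right)
    · exact inf_le_right.trans ((key j i h).trans le_sup_left)
  have heq : ∀ j ∈ Finset.range (2^n),
      ∫ t in Ico ((j:ℝ)/2^n) (((j:ℝ)+1)/2^n), g t = (2^n:ℝ)⁻¹ * g ((j:ℝ)/2^n) := by
    intro j hj
    rw [Finset.mem_range] at hj
    rw [MeasureTheory.setIntegral_congr_fun measurableSet_Ico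
      (fun t ht => hg j hj t ht)]
    rw [MeasureTheory.setIntegral_const, measureReal_def, Real.volume_Ico, smul_eq_mul]
    congr 1
    rw [ENNReal.toReal_ofReal (by rw [sub_nonneg]; gcongr; linarith)]
    field_simp
    ring
  have hint : ∀ j ∈ Finset.range (2^n),
      IntegrableOn g (Ico ((j:ℝ)/2^n) (((j:ℝ)+1)/2^n)) := by
    intro j hj
    rw [Finset.mem_range] at hj
    exact (integrableOn_const (C := g ((j:ℝ)/2^n)) measure_Ico_lt_top.ne).congr_fun
      (fun t ht => (hg j hj t ht).symm) measurableSet_Ico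
  rw [hcov, MeasureTheory.integral_biUnion_finset _ hms hdisj hint,
    Finset.sum_congr rfl heq, ← Finset.mul_sum]

lemma sum_pair_aux (m : ℕ) (g : ℕ → ℝ) :
    ∑ j ∈ Finset.range (2*m), g j = ∑ q ∈ Finset.range m, (g (2*q) + g (2*q+1)) := by
  induction m with
  | zero => simp
  | succ m ih =>
      rw [Finset.sum_range_succ, ← ih, Nat.mul_succ, Finset.sum_range_succ, Finset.sum_range_succ]
      ring_nf

/-- Lemma A: sphere version of uniform convexity. -/
lemma lemA {c p : ℝ} (hc : 0 < c) (hp : 2 ≤ p) (hN : IsNormOn X N)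
    (hmod : ∀ t ∈ Ioc (0 : ℝ) 1, convMod N t ≥ c * t ^ p)
    {x y : X} (hx : N x = 1) (hy : N y = 1) :
    N (x + y) ≤ 2 - (2 * c / 2 ^ p) * N (x - y) ^ p := by
  set s := N (x - y) with hs
  have hs0 : 0 ≤ s := hN.nonneg _
  have hs2 : s ≤ 2 := by have := hN.add_le x (-y); rw [hN.neg] at this
                         simp only [← sub_eq_add_neg] at this; rw [← hs] at this; linarith
  rcases eq_or_lt_of_le hs0 with h0 | h0
  · have hxy : x = y := by
      have : N (x - y) = 0 := by rw [← hs, ← h0]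
      have := hN.eq_zero _ this; rwa [sub_eq_zero] at this
    have hNxy : N (x + y) = 2 := by
      rw [← hxy]
      have := hN.smul_eq 2 x; rw [two_smul] at this; simp [this, hx]
    rw [hNxy, ← h0, Real.zero_rpow (by positivity)]
    ring_nf
    try norm_num
  · -- s > 0, use t = s/2
    have ht : s / 2 ∈ Ioc (0:ℝ) 1 := ⟨by linarith, by linarith⟩
    have hmem : N (x + y) ∈ {r | ∃ a b, N a = 1 ∧ N b = 1 ∧ N (a - b) > s/2 ∧ r = N (a + b)} :=
      ⟨x, y, hx, hy, by rw [← hs]; linarith, rfl⟩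
    have hbdd : BddAbove {r | ∃ a b, N a = 1 ∧ N b = 1 ∧ N (a - b) > s/2 ∧ r = N (a + b)} := by
      refine ⟨2, ?_⟩
      rintro r ⟨a, b, ha, hb, _, rfl⟩
      have := hN.add_le a b; rw [ha, hb] at this; linarith
    have hsup := hmod (s/2) ht
    unfold convMod at hsup
    have h1 : N (x + y) ≤ sSup {r | ∃ a b, N a = 1 ∧ N b = 1 ∧ N (a - b) > s/2 ∧ r = N (a + b)} :=
      le_csSup hbdd hmem
    have h2 : (s/2) ^ p = s ^ p / 2 ^ p := Real.div_rpow hs0 (by norm_num) p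
    rw [h2] at hsup
    have h2p : (0:ℝ) < 2 ^ p := Real.rpow_pos_of_pos (by norm_num) p
    have hrw : 2 * c / 2 ^ p * s ^ p = 2 * (c * (s ^ p / 2 ^ p)) := by ring
    rw [hrw]
    linarith

/-- Lemma A': scaled sphere version. -/
lemma lemA' {c p γ : ℝ} (hc : 0 < c) (hp : 2 ≤ p) (hγ : 1 ≤ γ) (hN : IsNormOn X N)
    (hmod : ∀ t ∈ Ioc (0 : ℝ) 1, convMod N t ≥ c * t ^ p)
    {M : ℝ} (hM0 : 0 < M) (hMγ : M ≤ γ)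
    {x y : X} (hx : N x = M) (hy : N y = M) :
    N (x + y) ≤ 2 * M - ((2 * c / 2 ^ p) * γ ^ (1 - p)) * N (x - y) ^ p := by
  have hγ0 : (0:ℝ) < γ := by linarith
  set c₁ := 2 * c / 2 ^ p with hc₁
  have hc₁0 : 0 < c₁ := by
    have : (0:ℝ) < 2 ^ p := Real.rpow_pos_of_pos (by norm_num) p
    positivity
  have hMinv : |M⁻¹| = M⁻¹ := abs_of_pos (by positivity)
  have hxu : N (M⁻¹ • x) = 1 := by rw [hN.smul_eq, hMinv, hx, inv_mul_cancel₀ hM0.ne']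
  have hyu : N (M⁻¹ • y) = 1 := by rw [hN.smul_eq, hMinv, hy, inv_mul_cancel₀ hM0.ne']
  have hA := lemA hc hp hN hmod hxu hyu
  rw [← smul_add, ← smul_sub, hN.smul_eq, hN.smul_eq, hMinv] at hA
  have hs0 : 0 ≤ N (x - y) := hN.nonneg _
  have hrw : (M⁻¹ * N (x - y)) ^ p = (M ^ p)⁻¹ * N (x - y) ^ p := by
    rw [Real.mul_rpow (by positivity) hs0, Real.inv_rpow hM0.le]
  rw [hrw] at hA
  have key : c₁ * γ ^ (1 - p) ≤ c₁ * (M * (M ^ p)⁻¹) := by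
    have h1 : M ^ (1 - p) = M * (M ^ p)⁻¹ := by
      rw [Real.rpow_sub hM0, Real.rpow_one, div_eq_mul_inv]
    have h2 : γ ^ (1 - p) ≤ M ^ (1 - p) :=
      Real.rpow_le_rpow_of_nonpos hM0 hMγ (by linarith)
    rw [← h1]
    exact mul_le_mul_of_nonneg_left h2 hc₁0.le
  have hsp : 0 ≤ N (x - y) ^ p := Real.rpow_nonneg hs0 p
  have hmul := mul_le_mul_of_nonneg_left hA hM0.le
  have hMp : (0:ℝ) < M ^ p := Real.rpow_pos_of_pos hM0 p
  have hl : M * (M⁻¹ * N (x + y)) = N (x + y) := by field_simp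
  rw [hl] at hmul
  have : M * (2 - c₁ * ((M ^ p)⁻¹ * N (x - y) ^ p)) =
      2 * M - (c₁ * (M * (M ^ p)⁻¹)) * N (x - y) ^ p := by ring
  rw [this] at hmul
  have := mul_le_mul_of_nonneg_right key hsp
  linarith

/-- Lemma C core (assuming N y ≤ N x). -/
lemma lemCcore {c p γ : ℝ} (hc : 0 < c) (hp : 2 ≤ p) (hγ : 1 ≤ γ) (hN : IsNormOn X N)
    (hmod : ∀ t ∈ Ioc (0 : ℝ) 1, convMod N t ≥ c * t ^ p)
    {x y : X} (hxγ : N x ≤ γ) (hyγ : N y ≤ γ) (hba : N y ≤ N x) :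
    2 * (N ((2:ℝ)⁻¹ • (x + y)) + N ((2:ℝ)⁻¹ • (x + y)) ^ 2)
      + 2 * (min (γ ^ ((2:ℝ) - p) / 16) (((2 * c / 2 ^ p) * γ ^ (1 - p)) / 4))
        * N ((2:ℝ)⁻¹ • (x - y)) ^ p
      ≤ (N x + N x ^ 2) + (N y + N y ^ 2) := by
  have hγ0 : (0:ℝ) < γ := by linarith
  set κ₁ := (2 * c / 2 ^ p) * γ ^ (1 - p) with hκ₁
  have hκ₁0 : 0 < κ₁ := by
    have h2p : (0:ℝ) < 2 ^ p := Real.rpow_pos_of_pos (by norm_num) p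
    have := Real.rpow_pos_of_pos hγ0 (1 - p)
    positivity
  set κ := min (γ ^ ((2:ℝ) - p) / 16) (κ₁ / 4) with hκ
  have hκ0 : 0 < κ := by
    have := Real.rpow_pos_of_pos hγ0 ((2:ℝ) - p)
    exact lt_min (by positivity) (by positivity)
  set a := N x with ha
  set b := N y with hb
  have ha0 : 0 ≤ a := hN.nonneg x
  have hb0 : 0 ≤ b := hN.nonneg y
  have habs : |(2:ℝ)⁻¹| = (2:ℝ)⁻¹ := by norm_num
  have hm : N ((2:ℝ)⁻¹ • (x + y)) = N (x + y) / 2 := by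
    rw [hN.smul_eq, habs]; ring
  have hv : N ((2:ℝ)⁻¹ • (x - y)) = N (x - y) / 2 := by
    rw [hN.smul_eq, habs]; ring
  set s := N (x - y) / 2 with hs
  set Nm := N (x + y) / 2 with hNm
  rw [hm, hv]
  have hsum : N (x + y) ≤ a + b := hN.add_le x y
  have hdiff : N (x - y) ≤ a + b := by
    have h := hN.add_le x (-y)
    rw [hN.neg, ← sub_eq_add_neg] at h; exact le_trans h (le_refl _)
  have hNm0 : 0 ≤ Nm := by rw [hNm]; have := hN.nonneg (x + y); linarith
  have hNmle : Nm ≤ (a + b) / 2 := by rw [hNm]; linarith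
  have hs0 : 0 ≤ s := by rw [hs]; have := hN.nonneg (x - y); linarith
  have hsle : s ≤ (a + b) / 2 := by rw [hs]; linarith
  have hsγ : s ≤ γ := by
    apply hsle.trans; linarith
  have hsq : Nm ^ 2 ≤ ((a + b)/2) ^ 2 := by nlinarith
  rcases eq_or_lt_of_le hs0 with h0 | h0
  · rw [← h0, Real.zero_rpow (by positivity)]
    nlinarith
  rcases le_or_gt (s / 2) (a - b) with hcase | hcase
  · -- quadratic gain case
    have hspb : s ^ p ≤ γ ^ (p - 2) * s ^ 2 := by
      have h1 : s ^ p = s ^ (p - 2) * s ^ (2:ℝ) := by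
        rw [← Real.rpow_add h0]; ring_nf
      have h2 : s ^ (p - 2) ≤ γ ^ (p - 2) := Real.rpow_le_rpow hs0 hsγ (by linarith)
      have h3 : s ^ (2:ℝ) = s ^ 2 := by
        rw [show ((2:ℝ)) = ((2:ℕ):ℝ) by norm_num, Real.rpow_natCast]
      have h4 : (0:ℝ) ≤ s ^ 2 := by positivity
      calc s ^ p = s ^ (p - 2) * s ^ 2 := by rw [h1, h3]
        _ ≤ γ ^ (p - 2) * s ^ 2 := mul_le_mul_of_nonneg_right h2 h4
    have hγγ : γ ^ ((2:ℝ) - p) * γ ^ (p - 2) = 1 := by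
      rw [← Real.rpow_add hγ0]; norm_num
    have hκle : κ ≤ γ ^ ((2:ℝ) - p) / 16 := min_le_left _ _
    have hgp : 0 < γ ^ ((2:ℝ) - p) := Real.rpow_pos_of_pos hγ0 _
    have h2κ : 2 * κ * s ^ p ≤ s ^ 2 / 8 := by
      have h5 : 2 * κ * s ^ p ≤ 2 * (γ ^ ((2:ℝ) - p) / 16) * s ^ p := by
        have hsp : 0 ≤ s ^ p := Real.rpow_nonneg hs0 p
        nlinarith
      have h6 : 2 * (γ ^ ((2:ℝ) - p) / 16) * s ^ p ≤
          2 * (γ ^ ((2:ℝ) - p) / 16) * (γ ^ (p - 2) * s ^ 2) := by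
        have : 0 ≤ 2 * (γ ^ ((2:ℝ) - p) / 16) := by positivity
        exact mul_le_mul_of_nonneg_left hspb this
      have h7 : 2 * (γ ^ ((2:ℝ) - p) / 16) * (γ ^ (p - 2) * s ^ 2) = s ^ 2 / 8 := by
        have : γ ^ ((2:ℝ) - p) * γ ^ (p - 2) = 1 := hγγ
        nlinarith [this]
      linarith
    nlinarith [hsq, hcase, h2κ]
  · -- convexity gain case
    have hsa : s ≤ a := by linarith
    have ha0' : 0 < a := lt_of_lt_of_le h0 hsa
    have hb0' : 0 < b := by linarith
    have hba2 : a / 2 < b := by linarith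
    set y' := (a / b) • y with hy'
    have hNy' : N y' = a := by
      rw [hy', hN.smul_eq, abs_of_pos (div_pos ha0' hb0'), ← hb]
      field_simp
    have hyy' : N (y' - y) = a - b := by
      have : y' - y = (a / b - 1) • y := by rw [hy', sub_smul, one_smul]
      have hnn : (0:ℝ) ≤ a / b - 1 := by
        rw [sub_nonneg]; exact (one_le_div hb0').2 hba
      rw [this, hN.smul_eq, abs_of_nonneg hnn, ← hb]
      field_simp
    have hxy' : s ≤ N (x - y') := by
      have h1 : N (x - y) ≤ N (x - y') + N (y' - y) := by
        have := hN.add_le (x - y') (y' - y)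
        simpa [sub_add_sub_cancel] using this
      rw [hyy'] at h1
      have : N (x - y) = 2 * s := by rw [hs]; ring
      linarith
    have hA' := lemA' hc hp hγ hN hmod ha0' hxγ ha.symm hNy'
    rw [← hκ₁] at hA'
    have hpow : s ^ p ≤ N (x - y') ^ p := Real.rpow_le_rpow hs0 hxy' (by linarith)
    have hA'' : N (x + y') ≤ 2 * a - κ₁ * s ^ p := by nlinarith
    have hcomb : x + y = (b / a) • (x + y') + ((1 - b / a)) • x := by
      rw [hy', smul_add, smul_smul, sub_smul, one_smul]
      have : b / a * (a / b) = 1 := by field_simp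
      rw [this, one_smul]
      abel
    have hfrac0 : 0 < b / a := by positivity
    have hfrac1 : b / a ≤ 1 := by rw [div_le_one ha0']; exact hba
    have hNxy : N (x + y) ≤ (b / a) * N (x + y') + (1 - b / a) * a := by
      rw [hcomb]
      have h1 := hN.add_le ((b / a) • (x + y')) ((1 - b / a) • x)
      rw [hN.smul_eq, hN.smul_eq, abs_of_pos hfrac0, abs_of_nonneg (by linarith), ← ha] at h1
      exact h1
    have hhalf : (1:ℝ)/2 ≤ b / a := by
      rw [le_div_iff₀ ha0']; linarith
    have hsp : 0 ≤ s ^ p := Real.rpow_nonneg hs0 p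
    have hgain : N (x + y) ≤ a + b - (κ₁ / 2) * s ^ p := by
      have h2 : (b / a) * N (x + y') ≤ (b / a) * (2 * a - κ₁ * s ^ p) :=
        mul_le_mul_of_nonneg_left hA'' hfrac0.le
      have hane : a ≠ 0 := ha0'.ne'
      have h3 : (b / a) * (2 * a - κ₁ * s ^ p) + (1 - b / a) * a
          = a + b - (b / a) * (κ₁ * s ^ p) := by
        field_simp; ring
      have h4 : (κ₁ / 2) * s ^ p ≤ (b / a) * (κ₁ * s ^ p) := by
        have : 0 ≤ κ₁ * s ^ p := by positivity
        nlinarith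
      linarith
    have hκle : κ ≤ κ₁ / 4 := min_le_right _ _
    have e1 : 2 * κ * s ^ p ≤ (κ₁ / 2) * s ^ p :=
      mul_le_mul_of_nonneg_right (by linarith : 2 * κ ≤ κ₁ / 2) hsp
    have e2 : 2 * Nm ^ 2 ≤ a ^ 2 + b ^ 2 := by
      have hid : ((a + b)/2) ^ 2 = (a ^ 2 + b ^ 2)/2 - ((a - b)/2) ^ 2 := by ring
      linarith [hsq, sq_nonneg ((a - b)/2)]
    have e3 : N (x + y) = 2 * Nm := by rw [hNm]; ring
    rw [e3] at hgain
    linarith [hgain, e1, e2]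

end Aux

/-- if some equivalent norm has modulus of convexity `≥ c·t^p`, then every
Walsh–Paley martingale with values in `B_X` satisfies `∑ₙ ∫₀¹ ‖dfₙ‖^p < ∞`. -/
theorem stmt18 {X : Type*} [NormedAddCommGroup X] [NormedSpace ℝ X] [CompleteSpace X]
    (c p : ℝ) (hc : 0 < c) (hp : 2 ≤ p)
    (N : X → ℝ) (hN : IsNormOn X N) (γ : ℝ) (hγ : 1 ≤ γ) (he : EquivNorm γ N)
    (hmod : ∀ t ∈ Ioc (0 : ℝ) 1, convMod N t ≥ c * t ^ p)
    (f : ℕ → ℝ → X)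
    -- `fₙ` is constant on the dyadic intervals of generation `n`
    (hconst : ∀ (n j : ℕ), j < 2 ^ n → ∀ s t : ℝ,
      s ∈ Ico ((j : ℝ) / 2 ^ n) (((j : ℝ) + 1) / 2 ^ n) →
      t ∈ Ico ((j : ℝ) / 2 ^ n) (((j : ℝ) + 1) / 2 ^ n) → f n s = f n t)
    -- the martingale property: `fₙ` is the average of `f_{n+1}` on the two halves
    (hmart : ∀ (n j : ℕ), j < 2 ^ n →
      f n ((j : ℝ) / 2 ^ n) = (2 : ℝ)⁻¹ •
        (f (n + 1) ((2 * j : ℝ) / 2 ^ (n + 1)) + f (n + 1) ((2 * j + 1 : ℝ) / 2 ^ (n + 1))))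
    -- the martingale takes values in the unit ball
    (hball : ∀ n : ℕ, ∀ t ∈ Ico (0 : ℝ) 1, ‖f n t‖ ≤ 1) :
    Summable (fun n : ℕ => ∫ t in Ico (0 : ℝ) 1,
      ‖if n = 0 then f 0 t else f n t - f (n - 1) t‖ ^ p) := by
  classical
  have hγ0 : (0:ℝ) < γ := by linarith
  have hp0 : (0:ℝ) < p := by linarith
  have h2p : (0:ℝ) < 2 ^ p := Real.rpow_pos_of_pos (by norm_num) p
  set κ := min (γ ^ ((2:ℝ) - p) / 16) (((2 * c / 2 ^ p) * γ ^ (1 - p)) / 4) with hκdef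
  have hκ0 : 0 < κ := by
    have h1 := Real.rpow_pos_of_pos hγ0 ((2:ℝ) - p)
    have h2 := Real.rpow_pos_of_pos hγ0 (1 - p)
    exact lt_min (by positivity) (by positivity)
  have hCineq : ∀ x y : X, N x ≤ γ → N y ≤ γ →
      2 * (N ((2:ℝ)⁻¹ • (x + y)) + N ((2:ℝ)⁻¹ • (x + y)) ^ 2)
        + 2 * κ * N ((2:ℝ)⁻¹ • (x - y)) ^ p
        ≤ (N x + N x ^ 2) + (N y + N y ^ 2) := by
    intro x y hx hy
    rcases le_total (N y) (N x) with h | h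
    · exact lemCcore hc hp hγ hN hmod hx hy h
    · have h2 := lemCcore hc hp hγ hN hmod hy hx h
      have e2 : N ((2:ℝ)⁻¹ • (y - x)) = N ((2:ℝ)⁻¹ • (x - y)) := by
        rw [show (2:ℝ)⁻¹ • (y - x) = -((2:ℝ)⁻¹ • (x - y)) by module, hN.neg]
      rw [show y + x = x + y from add_comm y x, e2] at h2
      linarith
  have h2n : ∀ n : ℕ, (0:ℝ) < 2 ^ n := fun n => by positivity
  have hanchor : ∀ n j : ℕ, ((j:ℝ)/2^n) ∈ Ico ((j:ℝ)/2^n) (((j:ℝ)+1)/2^n) := by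
    intro n j
    refine ⟨le_refl _, ?_⟩
    rw [div_lt_div_iff₀ (h2n n) (h2n n)]
    nlinarith [h2n n]
  have hmem01 : ∀ n j : ℕ, j < 2^n → ((j:ℝ)/2^n) ∈ Ico (0:ℝ) 1 := by
    intro n j hj
    refine ⟨by positivity, ?_⟩
    rw [div_lt_one (h2n n)]
    have : (j:ℝ) < ((2^n:ℕ):ℝ) := by exact_mod_cast hj
    push_cast at this; exact this
  have hNγ : ∀ z : X, ‖z‖ ≤ 1 → N z ≤ γ := by
    intro z hz
    exact (he z).2.trans (by nlinarith)
  have hnormle : ∀ z : X, ‖z‖ ≤ γ * N z := by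
    intro z
    have h1 := (he z).1
    have h2 : γ * (γ⁻¹ * ‖z‖) ≤ γ * N z := mul_le_mul_of_nonneg_left h1 hγ0.le
    rwa [← mul_assoc, mul_inv_cancel₀ hγ0.ne', one_mul] at h2
  have hvγ : ∀ n j : ℕ, j < 2^n → N (f n ((j:ℝ)/2^n)) ≤ γ :=
    fun n j hj => hNγ _ (hball n _ (hmem01 n j hj))
  -- the potential
  set Φ : ℕ → ℝ := fun n => (2^n:ℝ)⁻¹ * ∑ j ∈ Finset.range (2^n),
      (N (f n ((j:ℝ)/2^n)) + N (f n ((j:ℝ)/2^n))^2) with hΦ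
  set D : ℕ → ℝ := fun n => (2^(n+1):ℝ)⁻¹ * ∑ j ∈ Finset.range (2^(n+1)),
      N (f (n+1) ((j:ℝ)/2^(n+1)) - f n ((j:ℝ)/2^(n+1))) ^ p with hD
  -- per-pair inequality
  have hpair : ∀ n q : ℕ, q < 2^n →
      2*(N (f n ((q:ℝ)/2^n)) + N (f n ((q:ℝ)/2^n))^2)
        + κ * (N (f (n+1) (((2*q:ℕ):ℝ)/2^(n+1)) - f n (((2*q:ℕ):ℝ)/2^(n+1))) ^ p
             + N (f (n+1) (((2*q+1:ℕ):ℝ)/2^(n+1)) - f n (((2*q+1:ℕ):ℝ)/2^(n+1))) ^ p)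
      ≤ (N (f (n+1) (((2*q:ℕ):ℝ)/2^(n+1))) + N (f (n+1) (((2*q:ℕ):ℝ)/2^(n+1)))^2)
        + (N (f (n+1) (((2*q+1:ℕ):ℝ)/2^(n+1))) + N (f (n+1) (((2*q+1:ℕ):ℝ)/2^(n+1)))^2) := by
    intro n q hq
    have hc1 : ((2*q:ℕ):ℝ) = 2*(q:ℝ) := by push_cast; ring
    have hc2 : ((2*q+1:ℕ):ℝ) = 2*(q:ℝ)+1 := by push_cast; ring
    have he0 : (2*(q:ℝ))/2^(n+1) = (q:ℝ)/2^n := two_mul_div_aux n _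
    rw [hc1, hc2]
    have hm := hmart n q hq
    set A := f (n+1) ((2*(q:ℝ))/2^(n+1)) with hA
    set B := f (n+1) ((2*(q:ℝ)+1)/2^(n+1)) with hB
    set V := f n ((q:ℝ)/2^n) with hV
    have hfn1 : f n ((2*(q:ℝ))/2^(n+1)) = V := by rw [he0]
    have hparent : (2*(q:ℝ)+1)/2^(n+1) ∈ Ico ((q:ℝ)/2^n) (((q:ℝ)+1)/2^n) := by
      constructor
      · rw [← he0]; gcongr; linarith
      · have hup : ((q:ℝ)+1)/2^n = (2*(q:ℝ)+2)/2^(n+1) := by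
          rw [← two_mul_div_aux n ((q:ℝ)+1)]; ring_nf
        rw [hup, div_lt_div_iff₀ (h2n (n+1)) (h2n (n+1))]
        nlinarith [h2n (n+1)]
    have hfn2 : f n ((2*(q:ℝ)+1)/2^(n+1)) = V := hconst n q hq _ _ hparent (hanchor n q)
    have hA01 : (2*(q:ℝ))/2^(n+1) ∈ Ico (0:ℝ) 1 := by rw [he0]; exact hmem01 n q hq
    have hB01 : (2*(q:ℝ)+1)/2^(n+1) ∈ Ico (0:ℝ) 1 := by
      rw [← hc2]
      apply hmem01 (n+1) (2*q+1)
      have : 2^(n+1) = 2*2^n := by rw [pow_succ]; ring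
      omega
    have hNA : N A ≤ γ := hNγ _ (hball (n+1) _ hA01)
    have hNB : N B ≤ γ := hNγ _ (hball (n+1) _ hB01)
    have hkey := hCineq A B hNA hNB
    have hmid : (2:ℝ)⁻¹ • (A + B) = V := hm.symm
    rw [hmid] at hkey
    have hd1 : A - V = (2:ℝ)⁻¹ • (A - B) := by rw [hm]; module
    have hd2 : B - V = -((2:ℝ)⁻¹ • (A - B)) := by rw [hm]; module
    rw [hfn1, hfn2, hd1, hd2, hN.neg]
    linarith [hkey]
  -- the step inequality
  have hstep : ∀ n : ℕ, Φ n + κ * D n ≤ Φ (n+1) := by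
    intro n
    have hpow : 2^(n+1) = 2*2^n := by rw [pow_succ]; ring
    have hsum := Finset.sum_le_sum (fun q (hq : q ∈ Finset.range (2^n)) =>
      hpair n q (Finset.mem_range.1 hq))
    rw [Finset.sum_add_distrib, ← Finset.mul_sum, ← Finset.mul_sum] at hsum
    have hg1 : ∑ q ∈ Finset.range (2^n),
        (N (f (n+1) (((2*q:ℕ):ℝ)/2^(n+1)) - f n (((2*q:ℕ):ℝ)/2^(n+1))) ^ p
          + N (f (n+1) (((2*q+1:ℕ):ℝ)/2^(n+1)) - f n (((2*q+1:ℕ):ℝ)/2^(n+1))) ^ p)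
        = ∑ j ∈ Finset.range (2^(n+1)),
            N (f (n+1) ((j:ℝ)/2^(n+1)) - f n ((j:ℝ)/2^(n+1))) ^ p := by
      rw [hpow, sum_pair_aux]
    have hg2 : ∑ q ∈ Finset.range (2^n),
        ((N (f (n+1) (((2*q:ℕ):ℝ)/2^(n+1))) + N (f (n+1) (((2*q:ℕ):ℝ)/2^(n+1)))^2)
          + (N (f (n+1) (((2*q+1:ℕ):ℝ)/2^(n+1))) + N (f (n+1) (((2*q+1:ℕ):ℝ)/2^(n+1)))^2))
        = ∑ j ∈ Finset.range (2^(n+1)),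
            (N (f (n+1) ((j:ℝ)/2^(n+1))) + N (f (n+1) ((j:ℝ)/2^(n+1)))^2) := by
      rw [hpow, sum_pair_aux]
    rw [hg1, hg2] at hsum
    simp only [hΦ, hD]
    set S := ∑ j ∈ Finset.range (2^n), (N (f n ((j:ℝ)/2^n)) + N (f n ((j:ℝ)/2^n))^2) with hS
    set Tg := ∑ j ∈ Finset.range (2^(n+1)),
        N (f (n+1) ((j:ℝ)/2^(n+1)) - f n ((j:ℝ)/2^(n+1))) ^ p with hTg
    set Tφ := ∑ j ∈ Finset.range (2^(n+1)),
        (N (f (n+1) ((j:ℝ)/2^(n+1))) + N (f (n+1) ((j:ℝ)/2^(n+1)))^2) with hTφ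
    have hmul := mul_le_mul_of_nonneg_left hsum (inv_nonneg.2 (h2n (n+1)).le)
    have hid : (2^(n+1):ℝ)⁻¹ * (2 * S + κ * Tg)
        = (2^n:ℝ)⁻¹ * S + κ * ((2^(n+1):ℝ)⁻¹ * Tg) := by
      rw [pow_succ]
      field_simp
    linarith [hid ▸ hmul]
  -- interval containment for children
  have hsub : ∀ n j : ℕ, j < 2^(n+1) → ∀ t : ℝ,
      t ∈ Ico ((j:ℝ)/2^(n+1)) (((j:ℝ)+1)/2^(n+1)) →
      t ∈ Ico (((j/2:ℕ):ℝ)/2^n) ((((j/2:ℕ):ℝ)+1)/2^n) := by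
    intro n j hj t ⟨ht1, ht2⟩
    have hq1 : 2*(j/2) ≤ j := by omega
    have hq2 : j+1 ≤ 2*(j/2)+2 := by omega
    constructor
    · calc (((j/2:ℕ):ℝ))/2^n = (2*((j/2:ℕ):ℝ))/2^(n+1) := (two_mul_div_aux n _).symm
        _ ≤ (j:ℝ)/2^(n+1) := by
            gcongr
            have : ((2*(j/2):ℕ):ℝ) ≤ (j:ℝ) := by exact_mod_cast hq1
            push_cast at this; linarith
        _ ≤ t := ht1
    · calc t < ((j:ℝ)+1)/2^(n+1) := ht2
        _ ≤ (2*(((j/2:ℕ):ℝ)+1))/2^(n+1) := by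
            gcongr
            have : ((j+1:ℕ):ℝ) ≤ ((2*(j/2)+2:ℕ):ℝ) := by exact_mod_cast hq2
            push_cast at this; linarith
        _ = (((j/2:ℕ):ℝ)+1)/2^n := two_mul_div_aux n _
  -- integral identities
  have hint0 : (∫ t in Ico (0:ℝ) 1, ‖f 0 t‖^p) = ‖f 0 (((0:ℕ):ℝ)/2^0)‖^p := by
    rw [dyadic_integral 0 (fun t => ‖f 0 t‖^p) ?_]
    · simp
    · intro j hj t ht
      have : f 0 t = f 0 ((j:ℝ)/2^0) := hconst 0 j hj t _ ht (hanchor 0 j)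
      simp only [this]
  have hintS : ∀ n : ℕ, (∫ t in Ico (0:ℝ) 1, ‖f (n+1) t - f n t‖^p)
      = (2^(n+1):ℝ)⁻¹ * ∑ j ∈ Finset.range (2^(n+1)),
          ‖f (n+1) ((j:ℝ)/2^(n+1)) - f n ((j:ℝ)/2^(n+1))‖^p := by
    intro n
    rw [dyadic_integral (n+1) (fun t => ‖f (n+1) t - f n t‖^p) ?_]
    intro j hj t ht
    have hq : j/2 < 2^n := by
      have : 2^(n+1) = 2*2^n := by rw [pow_succ]; ring
      omega
    have h1 : f (n+1) t = f (n+1) ((j:ℝ)/2^(n+1)) :=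
      hconst (n+1) j hj t _ ht (hanchor (n+1) j)
    have h2 : f n t = f n ((j:ℝ)/2^(n+1)) :=
      hconst n (j/2) hq t _ (hsub n j hj t ht) (hsub n j hj _ (hanchor (n+1) j))
    simp only [h1, h2]
  -- norm comparison
  have hcomp : ∀ n : ℕ,
      (2^(n+1):ℝ)⁻¹ * ∑ j ∈ Finset.range (2^(n+1)),
          ‖f (n+1) ((j:ℝ)/2^(n+1)) - f n ((j:ℝ)/2^(n+1))‖^p ≤ γ^p * D n := by
    intro n
    have hterm : ∀ j ∈ Finset.range (2^(n+1)),
        ‖f (n+1) ((j:ℝ)/2^(n+1)) - f n ((j:ℝ)/2^(n+1))‖^p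
          ≤ γ^p * N (f (n+1) ((j:ℝ)/2^(n+1)) - f n ((j:ℝ)/2^(n+1))) ^ p := by
      intro j _
      set z := f (n+1) ((j:ℝ)/2^(n+1)) - f n ((j:ℝ)/2^(n+1))
      calc ‖z‖^p ≤ (γ * N z)^p :=
            Real.rpow_le_rpow (norm_nonneg _) (hnormle z) hp0.le
        _ = γ^p * N z ^ p := Real.mul_rpow hγ0.le (hN.nonneg z)
    have := Finset.sum_le_sum hterm
    rw [← Finset.mul_sum] at this
    simp only [hD]
    have h := mul_le_mul_of_nonneg_left this (inv_nonneg.2 (h2n (n+1)).le)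
    calc (2^(n+1):ℝ)⁻¹ * ∑ j ∈ Finset.range (2^(n+1)),
          ‖f (n+1) ((j:ℝ)/2^(n+1)) - f n ((j:ℝ)/2^(n+1))‖^p
        ≤ (2^(n+1):ℝ)⁻¹ * (γ^p * ∑ j ∈ Finset.range (2^(n+1)),
            N (f (n+1) ((j:ℝ)/2^(n+1)) - f n ((j:ℝ)/2^(n+1))) ^ p) := h
      _ = γ^p * ((2^(n+1):ℝ)⁻¹ * ∑ j ∈ Finset.range (2^(n+1)),
            N (f (n+1) ((j:ℝ)/2^(n+1)) - f n ((j:ℝ)/2^(n+1))) ^ p) := by ring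
  -- Φ bounds
  have hΦub : ∀ n : ℕ, Φ n ≤ γ + γ^2 := by
    intro n
    simp only [hΦ]
    have hsum : ∑ j ∈ Finset.range (2^n), (N (f n ((j:ℝ)/2^n)) + N (f n ((j:ℝ)/2^n))^2)
        ≤ ∑ j ∈ Finset.range (2^n), (γ + γ^2) := by
      apply Finset.sum_le_sum
      intro j hj
      have h1 := hvγ n j (Finset.mem_range.1 hj)
      have h2 := hN.nonneg (f n ((j:ℝ)/2^n))
      nlinarith
    rw [Finset.sum_const, Finset.card_range, nsmul_eq_mul] at hsum
    have hcast : ((2^n:ℕ):ℝ) = (2:ℝ)^n := by push_cast; ring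
    rw [hcast] at hsum
    have := mul_le_mul_of_nonneg_left hsum (inv_nonneg.2 (h2n n).le)
    have hid : (2^n:ℝ)⁻¹ * ((2:ℝ)^n * (γ + γ^2)) = γ + γ^2 := by
      field_simp
    linarith [hid ▸ this]
  have hΦ0 : ∀ n : ℕ, 0 ≤ Φ n := by
    intro n
    simp only [hΦ]
    apply mul_nonneg (inv_nonneg.2 (h2n n).le)
    apply Finset.sum_nonneg
    intro j hj
    have h2 := hN.nonneg (f n ((j:ℝ)/2^n))
    nlinarith
  -- assemble
  set K := γ^p / κ with hK
  have hK0 : 0 ≤ K := by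
    have := Real.rpow_pos_of_pos hγ0 p
    positivity
  have haS : ∀ n : ℕ, (∫ t in Ico (0:ℝ) 1, ‖f (n+1) t - f n t‖^p)
      ≤ K * (Φ (n+1) - Φ n) := by
    intro n
    rw [hintS n]
    have h1 := hcomp n
    have h2 : γ^p * D n ≤ K * (Φ (n+1) - Φ n) := by
      have h3 : κ * D n ≤ Φ (n+1) - Φ n := by linarith [hstep n]
      have h4 := mul_le_mul_of_nonneg_left h3 hK0
      have hκne : κ ≠ 0 := ne_of_gt hκ0
      have h5 : K * (κ * D n) = γ^p * D n := by
        rw [hK]; field_simp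
      linarith [h5 ▸ h4]
    linarith
  have ha0 : (∫ t in Ico (0:ℝ) 1, ‖f 0 t‖^p) ≤ 1 := by
    rw [hint0]
    apply Real.rpow_le_one (norm_nonneg _) ?_ hp0.le
    apply hball 0 _
    have := hmem01 0 0 (by norm_num)
    exact this
  apply summable_of_sum_range_le (c := 1 + K * (γ + γ^2))
  · intro n
    apply MeasureTheory.setIntegral_nonneg measurableSet_Ico
    intro t _
    exact Real.rpow_nonneg (norm_nonneg _) p
  · intro n
    have key : ∀ m : ℕ, ∑ i ∈ Finset.range (m+1),
        (∫ t in Ico (0:ℝ) 1, ‖if i = 0 then f 0 t else f i t - f (i-1) t‖^p)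
        ≤ 1 + K * (Φ m - Φ 0) := by
      intro m
      induction m with
      | zero =>
          rw [Finset.sum_range_one]
          simp only [if_pos rfl]
          simpa using ha0
      | succ m ih =>
          rw [Finset.sum_range_succ]
          have hterm : (∫ t in Ico (0:ℝ) 1,
              ‖if m+1 = 0 then f 0 t else f (m+1) t - f (m+1-1) t‖^p)
              ≤ K * (Φ (m+1) - Φ m) := by
            simp only [Nat.succ_ne_zero, if_false, Nat.add_sub_cancel]
            exact haS m
          linarith
    cases n with
    | zero =>
        simp only [Finset.range_zero, Finset.sum_empty]
        nlinarith [hK0, hγ0]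
    | succ m =>
        have h1 := key m
        have h2 : K * (Φ m - Φ 0) ≤ K * (γ + γ^2) :=
          mul_le_mul_of_nonneg_left (by linarith [hΦub m, hΦ0 0]) hK0
        linarith
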